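/- Let α = 3 - 2√2 and for 1 ≤ i ≤ n define r(i) = (1 + α^n - α^{n-i+1} - α^{i-1})/(2√2(1-α^n)) + (n-i+1)(i-1)/n. Then for 1 ≤ i < n, r(i+1) - r(i) = (1-α)·α^{-1-i}·(α^{2i} - α^{n+1})/(2√2(1-α^n)) + (n+1-2i)/n; consequently r(i+1) ≥ r(i) if n ≥ 2i - 1 and r(i+1) < r(i) otherwise. -/
import Mathlib


theorem stmt_15 (α : ℝ) (hα : α = 3 - 2 * Real.sqrt 2) (n : ℕ) (hn : 3 ≤ n)
    (r : ℕ → ℝ)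
    (hr : ∀ i, 1 ≤ i → i ≤ n → r i =
      (1 + α ^ n - α ^ (n - i + 1) - α ^ (i - 1)) / (2 * Real.sqrt 2 * (1 - α ^ n)) +
      ((n : ℝ) - i + 1) * ((i : ℝ) - 1) / n) :
    ∀ i, 1 ≤ i → i < n →
      (r (i + 1) - r i =
        (1 - α) * α ^ (-1 - (i : ℤ)) * (α ^ (2 * i) - α ^ (n + 1)) /
          (2 * Real.sqrt 2 * (1 - α ^ n)) + ((n : ℝ) + 1 - 2 * i) / n) ∧
      (n ≥ 2 * i - 1 → r (i + 1) ≥ r i) ∧ (n < 2 * i - 1 → r (i + 1) < r i) := by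
  intro i hi1 hin
  have hs2 : Real.sqrt 2 ^ 2 = 2 := Real.sq_sqrt (by norm_num)
  have hs0 : 0 < Real.sqrt 2 := Real.sqrt_pos.mpr (by norm_num)
  have hα0 : 0 < α := by nlinarith
  have hα1 : α < 1 := by nlinarith
  obtain ⟨j, rfl⟩ : ∃ j, i = j + 1 := ⟨i - 1, by omega⟩
  obtain ⟨k, rfl⟩ : ∃ k, n = j + k + 2 := ⟨n - j - 2, by omega⟩
  have hαn : α ^ (j + k + 2) < 1 := pow_lt_one₀ hα0.le hα1 (by omega)
  have hD : 0 < 2 * Real.sqrt 2 * (1 - α ^ (j + k + 2)) := by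
    apply mul_pos (by positivity); linarith
  have hD' : 2 * Real.sqrt 2 * (1 - α ^ (j + k + 2)) ≠ 0 := hD.ne'
  have hαne : α ≠ 0 := hα0.ne'
  have hn0 : ((j : ℝ) + (k : ℝ) + 2) ≠ 0 := by positivity
  have hr1 := hr (j + 1) (by omega) (by omega)
  rw [show j + k + 2 - (j + 1) + 1 = k + 2 from by omega,
      show j + 1 - 1 = j from by omega] at hr1
  have hr2 := hr (j + 1 + 1) (by omega) (by omega)
  rw [show j + k + 2 - (j + 1 + 1) + 1 = k + 1 from by omega,
      show j + 1 + 1 - 1 = j + 1 from by omega] at hr2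
  have hz : α ^ (-1 - ((j + 1 : ℕ) : ℤ)) = (α ^ (j + 2))⁻¹ := by
    rw [show (-1 - ((j + 1 : ℕ) : ℤ)) = -((j + 2 : ℕ) : ℤ) from by push_cast; ring,
      zpow_neg, zpow_natCast]
  have hdiff : r (j + 1 + 1) - r (j + 1) =
      (1 - α) * (α ^ j - α ^ (k + 1)) / (2 * Real.sqrt 2 * (1 - α ^ (j + k + 2))) +
      ((k : ℝ) + 1 - (j : ℝ)) / ((j : ℝ) + (k : ℝ) + 2) := by
    rw [hr2, hr1]
    push_cast
    field_simp
    ring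
  refine ⟨?_, ?_, ?_⟩
  · rw [hr2, hr1, hz]
    push_cast
    field_simp
    ring
  · intro h
    have hjk : j ≤ k + 1 := by omega
    have hp : α ^ (k + 1) ≤ α ^ j := pow_le_pow_of_le_one hα0.le hα1.le hjk
    have hj : (j : ℝ) ≤ (k : ℝ) + 1 := by exact_mod_cast hjk
    have t1 : 0 ≤ (1 - α) * (α ^ j - α ^ (k + 1)) /
        (2 * Real.sqrt 2 * (1 - α ^ (j + k + 2))) :=
      div_nonneg (mul_nonneg (by linarith) (by linarith)) hD.le
    have t2 : 0 ≤ ((k : ℝ) + 1 - (j : ℝ)) / ((j : ℝ) + (k : ℝ) + 2) :=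
      div_nonneg (by linarith) (by positivity)
    have := hdiff
    have : 0 ≤ r (j + 1 + 1) - r (j + 1) := by rw [hdiff]; linarith
    linarith
  · intro h
    have hjk : k + 1 < j := by omega
    have hp : α ^ j < α ^ (k + 1) := pow_lt_pow_right_of_lt_one₀ hα0 hα1 hjk
    have hj : (k : ℝ) + 1 < (j : ℝ) := by exact_mod_cast hjk
    have t1 : (1 - α) * (α ^ j - α ^ (k + 1)) /
        (2 * Real.sqrt 2 * (1 - α ^ (j + k + 2))) < 0 :=
      div_neg_of_neg_of_pos (by nlinarith) hD
    have t2 : ((k : ℝ) + 1 - (j : ℝ)) / ((j : ℝ) + (k : ℝ) + 2) < 0 :=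
      div_neg_of_neg_of_pos (by linarith) (by positivity)
    have : r (j + 1 + 1) - r (j + 1) < 0 := by rw [hdiff]; linarith
    linarith
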